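/- Let 𝓜 be a finite set of even cardinality M = 2n, ψ : 𝓜 → 𝓜 an involution, y ∈ 𝓜 a fixed point of ψ, and I ⊆ {1,…,M} a set of size k such that M+1−j ∈ I for every j ∈ I (so k is even). Then the number of vectors x ∈ X_ψ such that {j ∈ {1,…,M} : x_j = y} = I equals (M−1)^(n−k/2). -/

import Mathlib

open Finset

/-- The set of ψ-symmetric vectors of length `M`: vectors `x` with
`x (M+1-j) = ψ (x j)` for all `j` (0-indexed: `x j.rev = ψ (x j)`). -/
def Xpsi (α : Type*) [Fintype α] [DecidableEq α] (M : ℕ) (ψ : α → α) :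
    Finset (Fin M → α) :=
  Finset.univ.filter fun x => ∀ j : Fin M, x j.rev = ψ (x j)

/-- The number of occurrences of `y` among the components of `x`. -/
def occCount {α : Type*} {M : ℕ} [DecidableEq α] (x : Fin M → α) (y : α) : ℕ :=
  (Finset.univ.filter fun j => x j = y).card

/-- `mCount x k` is the number of elements occurring exactly `k` times among
the components of `x`. -/
def mCount {α : Type*} {M : ℕ} [Fintype α] [DecidableEq α] (x : Fin M → α) (k : ℕ) : ℕ :=
  (Finset.univ.filter fun y => occCount x y = k).card

/-- The set of fixed points of `ψ`. -/
def fixPts (α : Type*) [Fintype α] [DecidableEq α] (ψ : α → α) : Finset α :=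
  Finset.univ.filter fun y => ψ y = y

theorem stmt_3 {α : Type*} [Fintype α] [DecidableEq α] (n : ℕ) (hn : 1 ≤ n)
    (hcard : Fintype.card α = 2 * n) (ψ : α → α) (hψ : ∀ y, ψ (ψ y) = y)
    (y : α) (hy : ψ y = y) (k : ℕ) (I : Finset (Fin (2 * n)))
    (hIk : I.card = k) (hI : ∀ j ∈ I, j.rev ∈ I) :
    ((Xpsi α (2 * n) ψ).filter fun x =>
        (Finset.univ.filter fun j => x j = y) = I).card = (2 * n - 1) ^ (n - k / 2) := by
  classical
  have hrev : ∀ j : Fin (2 * n), (j.rev : ℕ) = 2 * n - 1 - (j : ℕ) := by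
    intro j
    rw [Fin.val_rev]
    omega
  set emb : Fin n → Fin (2 * n) := fun i => ⟨i.val, by omega⟩ with hembdef
  set t : Fin n → Finset α := fun i => if emb i ∈ I then {y} else Finset.univ \ {y}
    with htdef
  -- membership characterizations
  have memA : ∀ x : Fin (2 * n) → α,
      (x ∈ (Xpsi α (2 * n) ψ).filter fun x =>
        (Finset.univ.filter fun j => x j = y) = I) ↔
      (∀ j, x j.rev = ψ (x j)) ∧ ∀ j : Fin (2 * n), (x j = y ↔ j ∈ I) := by
    intro x
    simp [Xpsi, Finset.mem_filter, Finset.ext_iff]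
  have memB : ∀ f : Fin n → α, f ∈ Fintype.piFinset t ↔
      ∀ i, (emb i ∈ I → f i = y) ∧ (emb i ∉ I → f i ≠ y) := by
    intro f
    rw [Fintype.mem_piFinset]
    constructor
    · intro h i
      have := h i
      rw [htdef] at this
      by_cases hi : emb i ∈ I <;> simp [hi] at this <;> simp [hi, this]
    · intro h i
      rcases h i with ⟨h1, h2⟩
      rw [htdef]
      by_cases hi : emb i ∈ I <;> simp [hi, h1, h2]
  -- the main bijection
  set fwd : (Fin (2 * n) → α) → (Fin n → α) := fun x i => x (emb i) with hfwd
  have hsub : ∀ j : Fin (2 * n), ¬ (j : ℕ) < n → 2 * n - 1 - (j : ℕ) < n := by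
    intro j h
    have := j.isLt
    omega
  set bwd : (Fin n → α) → (Fin (2 * n) → α) := fun f j =>
    dite ((j : ℕ) < n) (fun h => f ⟨(j : ℕ), h⟩)
      (fun h => ψ (f ⟨2 * n - 1 - (j : ℕ), hsub j h⟩)) with hbwd
  have fwd_def : ∀ (x : Fin (2 * n) → α) (i : Fin n), fwd x i = x (emb i) := fun _ _ => rfl
  have bwd_lt : ∀ (f : Fin n → α) (j : Fin (2 * n)) (h : (j : ℕ) < n),
      bwd f j = f ⟨(j : ℕ), h⟩ := fun f j h => dif_pos h
  have bwd_ge : ∀ (f : Fin n → α) (j : Fin (2 * n)) (h : ¬ (j : ℕ) < n)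
      (h2 : 2 * n - 1 - (j : ℕ) < n),
      bwd f j = ψ (f ⟨2 * n - 1 - (j : ℕ), h2⟩) := fun f j h _ => dif_neg h
  have hpsiy : ∀ a : α, ψ a = y ↔ a = y := by
    intro a
    constructor
    · intro h'
      have := congrArg ψ h'
      rwa [hψ, hy] at this
    · intro h'; rw [h', hy]
  have hIrev : ∀ j : Fin (2 * n), j.rev ∈ I ↔ j ∈ I := by
    intro j
    constructor
    · intro hr
      have := hI _ hr
      rwa [Fin.rev_rev] at this
    · exact hI j
  have key : ((Xpsi α (2 * n) ψ).filter fun x =>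
      (Finset.univ.filter fun j => x j = y) = I).card = (Fintype.piFinset t).card := by
    refine Finset.card_nbij' fwd bwd ?_ ?_ ?_ ?_
    · intro x hx
      rw [Finset.mem_coe, memA] at hx
      rw [Finset.mem_coe, memB]
      intro i
      rw [fwd_def]
      exact ⟨fun hi => (hx.2 (emb i)).2 hi, fun hi h => hi ((hx.2 (emb i)).1 h)⟩
    · intro f hf
      rw [Finset.mem_coe, memB] at hf
      rw [Finset.mem_coe, memA]
      constructor
      · intro j
        by_cases h : (j : ℕ) < n
        · have h2 : ¬ ((j.rev : ℕ) < n) := by rw [hrev]; omega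
          have h3 : 2 * n - 1 - (j.rev : ℕ) < n := by rw [hrev]; omega
          rw [bwd_ge f j.rev h2 h3, bwd_lt f j h]
          refine congrArg ψ (congrArg f (Fin.ext ?_))
          show 2 * n - 1 - (j.rev : ℕ) = (j : ℕ)
          rw [hrev]
          omega
        · have h2 : (j.rev : ℕ) < n := by rw [hrev]; have := j.isLt; omega
          have h3 : 2 * n - 1 - (j : ℕ) < n := by have := j.isLt; omega
          rw [bwd_lt f j.rev h2, bwd_ge f j h h3, hψ]
          exact congrArg f (Fin.ext (hrev j))
      · intro j
        by_cases h : (j : ℕ) < n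
        · rw [bwd_lt f j h]
          have he : emb ⟨(j : ℕ), h⟩ = j := Fin.ext rfl
          have hfj := hf ⟨(j : ℕ), h⟩
          rw [he] at hfj
          constructor
          · intro hv
            by_contra hj
            exact hfj.2 hj hv
          · exact hfj.1
        · have h3 : 2 * n - 1 - (j : ℕ) < n := by have := j.isLt; omega
          rw [bwd_ge f j h h3, hpsiy]
          have he : emb ⟨2 * n - 1 - (j : ℕ), h3⟩ = j.rev := Fin.ext (hrev j).symm
          have hfj := hf ⟨2 * n - 1 - (j : ℕ), h3⟩
          rw [he] at hfj
          rw [← hIrev j]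
          constructor
          · intro hv
            by_contra hj
            exact hfj.2 hj hv
          · exact hfj.1
    · intro x hx
      rw [Finset.mem_coe, memA] at hx
      funext j
      by_cases h : (j : ℕ) < n
      · rw [bwd_lt _ j h, fwd_def]
      · have h3 : 2 * n - 1 - (j : ℕ) < n := by have := j.isLt; omega
        rw [bwd_ge _ j h h3, fwd_def]
        have he : emb ⟨2 * n - 1 - (j : ℕ), h3⟩ = j.rev := Fin.ext (hrev j).symm
        rw [he, hx.1 j, hψ]
    · intro f hf
      funext i
      exact (bwd_lt f (emb i) i.isLt).trans (congrArg f (Fin.ext rfl))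
  rw [key, Fintype.card_piFinset]
  clear key memA memB fwd_def bwd_lt bwd_ge hpsiy hIrev hfwd hbwd
  clear fwd bwd hsub
  -- compute the product
  have hy1 : ({y} : Finset α).card = 1 := Finset.card_singleton y
  have hyc : (Finset.univ \ {y} : Finset α).card = 2 * n - 1 := by
    rw [Finset.card_sdiff_of_subset (Finset.subset_univ _), Finset.card_univ, hcard, hy1]
  have hprod : ∏ i : Fin n, (t i).card
      = (2 * n - 1) ^ (Finset.univ.filter fun i : Fin n => emb i ∉ I).card := by
    rw [htdef]
    simp only [apply_ite Finset.card]
    rw [Finset.prod_ite, Finset.prod_const, Finset.prod_const, hy1, hyc, one_pow, one_mul]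
  rw [hprod]
  -- count: half of I
  have hhalf : (I.filter fun j : Fin (2 * n) => (j : ℕ) < n).card
      = (Finset.univ.filter fun i : Fin n => emb i ∈ I).card := by
    refine Finset.card_nbij' (fun j : Fin (2 * n) =>
        (⟨min (j : ℕ) (n - 1), Nat.lt_of_le_of_lt (Nat.min_le_right _ _)
          (Nat.sub_lt hn Nat.one_pos)⟩ : Fin n)) emb ?_ ?_ ?_ ?_
    · intro j hj
      rw [Finset.mem_coe, Finset.mem_filter] at hj
      simp only [Finset.mem_coe, Finset.mem_filter, Finset.mem_univ, true_and]
      have he : emb ⟨min (j : ℕ) (n - 1), Nat.lt_of_le_of_lt (Nat.min_le_right _ _)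
          (Nat.sub_lt hn Nat.one_pos)⟩ = j := by
        apply Fin.ext
        show min (j : ℕ) (n - 1) = (j : ℕ)
        have := hj.2
        omega
      rw [he]
      exact hj.1
    · intro i hi
      rw [Finset.mem_coe, Finset.mem_filter] at hi ⊢
      exact ⟨hi.2, i.isLt⟩
    · intro j hj
      rw [Finset.mem_coe, Finset.mem_filter] at hj
      apply Fin.ext
      show min (j : ℕ) (n - 1) = (j : ℕ)
      have := hj.2
      omega
    · intro i _
      apply Fin.ext
      show min (i : ℕ) (n - 1) = (i : ℕ)
      have := i.isLt
      omega
  have hother : (I.filter fun j : Fin (2 * n) => ¬ ((j : ℕ) < n)).card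
      = (I.filter fun j : Fin (2 * n) => (j : ℕ) < n).card := by
    refine Finset.card_nbij' Fin.rev Fin.rev ?_ ?_ ?_ ?_
    · intro j hj
      rw [Finset.mem_coe, Finset.mem_filter] at hj ⊢
      refine ⟨hI _ hj.1, ?_⟩
      rw [hrev]
      have := hj.2
      have := j.isLt
      omega
    · intro j hj
      rw [Finset.mem_coe, Finset.mem_filter] at hj ⊢
      refine ⟨hI _ hj.1, ?_⟩
      rw [hrev]
      have := hj.2
      omega
    · intro j _; exact Fin.rev_rev j
    · intro j _; exact Fin.rev_rev j
  have hksplit : k = (I.filter fun j : Fin (2 * n) => (j : ℕ) < n).card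
      + (I.filter fun j : Fin (2 * n) => ¬ ((j : ℕ) < n)).card := by
    rw [← hIk, Finset.card_filter_add_card_filter_not]
  have hsplit2 : (Finset.univ.filter fun i : Fin n => emb i ∈ I).card
      + (Finset.univ.filter fun i : Fin n => emb i ∉ I).card = n := by
    rw [Finset.card_filter_add_card_filter_not, Finset.card_univ, Fintype.card_fin]
  congr 1
  omega
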